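/- arXiv:2511.03554 — 4 statements merged into one kernel-verified Lean document; each statement's English description precedes it below -/
import Mathlib

section
/- Let F be a finite field with q elements, let n₁, n₂ ≥ 1, and set m₀ = min(n₁, n₂) and Δ₀ = |n₁ − n₂|. Then the fraction of n₁ × n₂ matrices over F having full rank m₀ is at least 1 − q^{−Δ₀}/(q − 1); in particular, since q ≥ 2, it is at least 1 − 2·q^{−(Δ₀+1)}. -/
/-- Weierstrass product inequality. -/
lemma my_one_sub_sum_le_prod_one_sub {ι : Type*} (s : Finset ι) (f : ι → ℝ)
    (h0 : ∀ i ∈ s, 0 ≤ f i) (h1 : ∀ i ∈ s, f i ≤ 1) :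
    1 - ∑ i ∈ s, f i ≤ ∏ i ∈ s, (1 - f i) := by
  classical
  induction s using Finset.induction with
  | empty => simp
  | @insert a t hat ih =>
    rw [Finset.sum_insert hat, Finset.prod_insert hat]
    have h0' : ∀ i ∈ t, 0 ≤ f i := fun i hi => h0 i (Finset.mem_insert_of_mem hi)
    have h1' : ∀ i ∈ t, f i ≤ 1 := fun i hi => h1 i (Finset.mem_insert_of_mem hi)
    have ih' := ih h0' h1'
    have ha0 := h0 a (Finset.mem_insert_self a t)
    have ha1 := h1 a (Finset.mem_insert_self a t)
    have hsum0 : 0 ≤ ∑ i ∈ t, f i := Finset.sum_nonneg h0'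
    nlinarith [Finset.prod_nonneg (fun i hi => sub_nonneg.2 (h1' i hi))]

/-- Counting full-rank matrices when `n₁ ≤ n₂`. -/
lemma my_card_full_rank {F : Type*} [Field F] [Fintype F] [DecidableEq F]
    (n₁ n₂ : ℕ) (h : n₁ ≤ n₂) :
    (Finset.univ.filter
      (fun M : Matrix (Fin n₁) (Fin n₂) F => M.rank = min n₁ n₂)).card
      = ∏ i : Fin n₁, (Fintype.card F ^ n₂ - Fintype.card F ^ (i : ℕ)) := by
  classical
  have hmin : min n₁ n₂ = n₁ := min_eq_left h
  have hcard : (Finset.univ.filter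
      (fun M : Matrix (Fin n₁) (Fin n₂) F => M.rank = min n₁ n₂)).card
      = Fintype.card {M : Matrix (Fin n₁) (Fin n₂) F // M.rank = min n₁ n₂} :=
    (Fintype.card_subtype _).symm
  rw [hcard]
  have hfr : Module.finrank F (Fin n₂ → F) = n₂ := by
    simp [Module.finrank_fintype_fun_eq_card]
  have e : {M : Matrix (Fin n₁) (Fin n₂) F // M.rank = min n₁ n₂}
      ≃ {s : Fin n₁ → Fin n₂ → F // LinearIndependent F s} := by
    refine (Equiv.subtypeEquiv (Matrix.of (m := Fin n₁) (n := Fin n₂) (α := F)).symm ?_)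
    intro M
    rw [hmin]
    constructor
    · intro hM
      rw [linearIndependent_iff_card_eq_finrank_span]
      rw [Matrix.rank_eq_finrank_span_row] at hM
      simp only [Fintype.card_fin, Set.finrank]
      exact hM.symm
    · intro hM
      have : Matrix.rank (Matrix.of ((Matrix.of (m := Fin n₁) (n := Fin n₂) (α := F)).symm M))
          = Fintype.card (Fin n₁) := hM.rank_matrix
      simpa using this
  rw [Fintype.card_congr e]
  have := card_linearIndependent (K := F) (V := Fin n₂ → F) (k := n₁) (by rw [hfr]; exact h)
  rw [Nat.card_eq_fintype_card] at this
  rw [this, hfr]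

/-- The analytic estimate for `n₁ ≤ n₂`. -/
lemma my_frac_bound (q n₁ n₂ : ℕ) (hq : 2 ≤ q) (h1 : 1 ≤ n₁) (h : n₁ ≤ n₂) :
    1 - (q : ℝ) ^ ((n₁ : ℤ) - (n₂ : ℤ)) / ((q : ℝ) - 1)
      ≤ ((∏ i : Fin n₁, (q ^ n₂ - q ^ (i : ℕ)) : ℕ) : ℝ) / (q : ℝ) ^ (n₁ * n₂) := by
  have hq0 : (0 : ℝ) < q := by positivity
  have hq1 : (1 : ℝ) < q := by exact_mod_cast hq
  have hcast : ((∏ i : Fin n₁, (q ^ n₂ - q ^ (i : ℕ)) : ℕ) : ℝ)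
      = ∏ i : Fin n₁, ((q : ℝ) ^ n₂ - (q : ℝ) ^ (i : ℕ)) := by
    rw [Nat.cast_prod]
    refine Finset.prod_congr rfl fun i _ => ?_
    have : q ^ (i : ℕ) ≤ q ^ n₂ :=
      Nat.pow_le_pow_right (by omega) (by omega)
    push_cast [Nat.cast_sub this]
    ring
  have hpow : (q : ℝ) ^ (n₁ * n₂) = ∏ _i : Fin n₁, (q : ℝ) ^ n₂ := by
    rw [Finset.prod_const, Finset.card_univ, Fintype.card_fin, ← pow_mul, mul_comm]
  rw [hcast, hpow, ← Finset.prod_div_distrib]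
  have hfac : ∀ i : Fin n₁,
      ((q : ℝ) ^ n₂ - (q : ℝ) ^ (i : ℕ)) / (q : ℝ) ^ n₂
        = 1 - (q : ℝ) ^ (i : ℕ) / (q : ℝ) ^ n₂ := by
    intro i
    field_simp
  calc 1 - (q : ℝ) ^ ((n₁ : ℤ) - (n₂ : ℤ)) / ((q : ℝ) - 1)
      ≤ 1 - ∑ i : Fin n₁, (q : ℝ) ^ (i : ℕ) / (q : ℝ) ^ n₂ := by
        have hsum : ∑ i : Fin n₁, (q : ℝ) ^ (i : ℕ) / (q : ℝ) ^ n₂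
            = (∑ i ∈ Finset.range n₁, (q : ℝ) ^ i) / (q : ℝ) ^ n₂ := by
          rw [← Finset.sum_div, Fin.sum_univ_eq_sum_range]
        have hgeom : ∑ i ∈ Finset.range n₁, (q : ℝ) ^ i
            = ((q : ℝ) ^ n₁ - 1) / ((q : ℝ) - 1) := geom_sum_eq (by linarith) n₁
        have hle : (∑ i ∈ Finset.range n₁, (q : ℝ) ^ i) / (q : ℝ) ^ n₂
            ≤ (q : ℝ) ^ ((n₁ : ℤ) - (n₂ : ℤ)) / ((q : ℝ) - 1) := by
          rw [hgeom]
          have hz : (q : ℝ) ^ ((n₁ : ℤ) - (n₂ : ℤ))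
              = (q : ℝ) ^ n₁ / (q : ℝ) ^ n₂ := by
            rw [zpow_sub₀ (ne_of_gt hq0)]
            norm_num [zpow_natCast]
          rw [hz, div_div, div_div, mul_comm ((q:ℝ) - 1) ((q:ℝ) ^ n₂)]
          gcongr
          · nlinarith [pow_pos hq0 n₂]
        linarith [hsum ▸ hle]
    _ ≤ ∏ i : Fin n₁, (1 - (q : ℝ) ^ (i : ℕ) / (q : ℝ) ^ n₂) := by
        apply my_one_sub_sum_le_prod_one_sub
        · intro i _; positivity
        · intro i _
          rw [div_le_one (by positivity)]
          exact pow_le_pow_right₀ (by linarith) (by omega)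
    _ = ∏ i : Fin n₁, ((q : ℝ) ^ n₂ - (q : ℝ) ^ (i : ℕ)) / (q : ℝ) ^ n₂ := by
        exact Finset.prod_congr rfl fun i _ => (hfac i).symm

/-- Rank probability asymptotics, part 1: the fraction of `n₁ × n₂` matrices over a finite
field with `q` elements that have full rank `m₀ = min n₁ n₂` is at least
`1 − q^{−Δ₀}/(q − 1)` with `Δ₀ = |n₁ − n₂|`; in particular it is at least
`1 − 2·q^{−(Δ₀+1)}`. -/
theorem full_rank_fraction_lower_bound {F : Type*} [Field F] [Fintype F] [DecidableEq F]
    (q n₁ n₂ : ℕ) (hq : Fintype.card F = q) (h1 : 1 ≤ n₁) (h2 : 1 ≤ n₂) :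
    1 - (q : ℝ) ^ (-(((n₁ : ℤ) - (n₂ : ℤ)).natAbs : ℤ)) / ((q : ℝ) - 1)
        ≤ ((Finset.univ.filter
              (fun M : Matrix (Fin n₁) (Fin n₂) F => M.rank = min n₁ n₂)).card : ℝ)
            / (q : ℝ) ^ (n₁ * n₂) ∧
    1 - 2 * (q : ℝ) ^ (-((((n₁ : ℤ) - (n₂ : ℤ)).natAbs : ℤ) + 1))
        ≤ ((Finset.univ.filter
              (fun M : Matrix (Fin n₁) (Fin n₂) F => M.rank = min n₁ n₂)).card : ℝ)
            / (q : ℝ) ^ (n₁ * n₂) := by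
  classical
  have hq2 : 2 ≤ q := hq ▸ Fintype.one_lt_card
  have hq0 : (0 : ℝ) < q := by positivity
  have main : 1 - (q : ℝ) ^ (-(((n₁ : ℤ) - (n₂ : ℤ)).natAbs : ℤ)) / ((q : ℝ) - 1)
      ≤ ((Finset.univ.filter
            (fun M : Matrix (Fin n₁) (Fin n₂) F => M.rank = min n₁ n₂)).card : ℝ)
          / (q : ℝ) ^ (n₁ * n₂) := by
    rcases le_total n₁ n₂ with hle | hle
    · have habs : (-(((n₁ : ℤ) - (n₂ : ℤ)).natAbs : ℤ)) = (n₁ : ℤ) - (n₂ : ℤ) := by omega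
      rw [habs, my_card_full_rank n₁ n₂ hle, hq]
      exact my_frac_bound q n₁ n₂ hq2 h1 hle
    · -- transpose case
      have hcardeq : (Finset.univ.filter
            (fun M : Matrix (Fin n₁) (Fin n₂) F => M.rank = min n₁ n₂)).card
          = (Finset.univ.filter
            (fun M : Matrix (Fin n₂) (Fin n₁) F => M.rank = min n₂ n₁)).card := by
        rw [← Fintype.card_subtype, ← Fintype.card_subtype]
        refine Fintype.card_congr (Equiv.subtypeEquiv
          ⟨Matrix.transpose, Matrix.transpose,
            Matrix.transpose_transpose, Matrix.transpose_transpose⟩ ?_)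
        intro M
        simp [Matrix.rank_transpose, min_comm]
      have habs : (-(((n₁ : ℤ) - (n₂ : ℤ)).natAbs : ℤ)) = (n₂ : ℤ) - (n₁ : ℤ) := by omega
      rw [habs, hcardeq, mul_comm n₁ n₂, my_card_full_rank n₂ n₁ hle, hq]
      exact my_frac_bound q n₂ n₁ hq2 h2 hle
  refine ⟨main, le_trans ?_ main⟩
  have hd : (q : ℝ) ^ (-(((n₁ : ℤ) - (n₂ : ℤ)).natAbs : ℤ)) / ((q : ℝ) - 1)
      ≤ 2 * (q : ℝ) ^ (-((((n₁ : ℤ) - (n₂ : ℤ)).natAbs : ℤ) + 1)) := by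
    have h2q : (2 : ℝ) ≤ q := by exact_mod_cast hq2
    have hz : (0 : ℝ) < (q : ℝ) ^ (-(((n₁ : ℤ) - (n₂ : ℤ)).natAbs : ℤ)) := by positivity
    have hΔ : (q : ℝ) ^ (-((((n₁ : ℤ) - (n₂ : ℤ)).natAbs : ℤ) + 1))
        = (q : ℝ) ^ (-(((n₁ : ℤ) - (n₂ : ℤ)).natAbs : ℤ)) / q := by
      rw [neg_add, zpow_add₀ (ne_of_gt hq0), zpow_neg_one]
      ring
    rw [hΔ, mul_div_assoc']
    rw [div_le_div_iff₀ (by linarith) hq0]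
    nlinarith
  linarith
end

section
/- For every integer k ≥ 1 and every integer a, ∑_{j=a+1}^{k} (j − k/2)·C(k, j)·2^{−k} = (k/4)·C(k−1, a)·2^{−(k−1)}, where C(k−1, a) = 0 if a < 0 or a > k−1 (and the sum is over those j with max(a+1, 0) ≤ j ≤ k). Equivalently, for X ~ Binomial(k, 1/2), Cov(X, 1_{X > a}) = (k/4)·P(Binomial(k−1, 1/2) = a). -/
-- auxiliary lemma A: sum of j*C(n+1,j) = (n+1)*2^n
lemma sumA (n : ℕ) : ∑ j ∈ Finset.range (n + 2), j * (n + 1).choose j = (n + 1) * 2 ^ n := by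
  rw [Finset.sum_range_succ']
  simp only [Nat.choose_zero_right, Nat.zero_mul, add_zero]
  have h : ∀ i, (i + 1) * (n + 1).choose (i + 1) = (n + 1) * n.choose i := by
    intro i
    rw [mul_comm, ← Nat.add_one_mul_choose_eq]
  rw [Finset.sum_congr rfl fun i _ => h i, ← Finset.mul_sum, Nat.sum_range_choose]

-- key pointwise identity in ℤ
lemma keyid (n j : ℕ) :
    ((2 * (j + 1) : ℤ) - (n + 1)) * ((n + 1).choose (j + 1) : ℤ)
      = (n + 1) * (n.choose j : ℤ) - (n + 1) * (n.choose (j + 1) : ℤ) := by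
  have h1 : ((n : ℤ) + 1) * (n.choose j : ℤ) = ((n + 1).choose (j + 1) : ℤ) * ((j : ℤ) + 1) := by
    exact_mod_cast congrArg (Nat.cast : ℕ → ℤ) (Nat.add_one_mul_choose_eq n j)
  have h2 : ((n + 1).choose (j + 1) : ℤ) = (n.choose j : ℤ) + (n.choose (j + 1) : ℤ) := by
    exact_mod_cast congrArg (Nat.cast : ℕ → ℤ) (Nat.choose_succ_succ n j)
  linear_combination -2 * h1 - ((n : ℤ) + 1) * h2

-- lemma B: telescoping sum
lemma sumB (n m : ℕ) :
    (∑ j ∈ Finset.range (n + 2),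
      (if m < j then ((2 * j : ℤ) - (n + 1)) * ((n + 1).choose j : ℤ) else 0))
      = (n + 1) * (n.choose m : ℤ) := by
  rw [← Finset.sum_filter]
  have hfil : (Finset.range (n + 2)).filter (fun j => m < j) = Finset.Ico (m + 1) (n + 2) := by
    ext j
    simp [Finset.mem_filter, Finset.mem_Ico, Finset.mem_range]
    omega
  rw [hfil]
  by_cases hm : n + 1 ≤ m
  · rw [Finset.Ico_eq_empty (by omega), Nat.choose_eq_zero_of_lt (by omega)]
    simp
  · push_neg at hm
    rw [Finset.sum_Ico_eq_sum_range]
    have hlen : n + 2 - (m + 1) = n + 1 - m := by omega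
    rw [hlen]
    have hterm : ∀ i, ((2 * ((m + 1 + i) : ℕ) : ℤ) - (n + 1)) * ((n + 1).choose (m + 1 + i) : ℤ)
        = (fun i => ((n : ℤ) + 1) * (n.choose (m + i) : ℤ)) i
          - (fun i => ((n : ℤ) + 1) * (n.choose (m + i) : ℤ)) (i + 1) := by
      intro i
      have := keyid n (m + i)
      simp only []
      have harg : m + 1 + i = (m + i) + 1 := by omega
      rw [harg]
      have harg2 : m + (i + 1) = (m + i) + 1 := by omega
      rw [harg2]
      push_cast at this ⊢
      linarith [this]
    rw [Finset.sum_congr rfl fun i _ => hterm i, Finset.sum_range_sub']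
    have h0 : n.choose (m + (n + 1 - m)) = 0 := by
      have : m + (n + 1 - m) = n + 1 := by omega
      rw [this]
      exact Nat.choose_eq_zero_of_lt (Nat.lt_succ_self n)
    simp only [h0, Nat.add_zero, Nat.cast_zero, mul_zero, sub_zero]


/-- Binomial coefficient `C(a, b)` for an integer lower index, with the convention that
it is `0` when `b < 0` (and `Nat.choose` already gives `0` when `b > a`). -/
def intChoose (a : ℕ) (b : ℤ) : ℕ := if 0 ≤ b then a.choose b.toNat else 0

/-- Simplification of the covariance term: for `X ~ Binomial(k, 1/2)` and any integer `a`,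
`∑_{j=a+1}^{k} (j − k/2)·C(k, j)·2^{−k} = (k/4)·C(k−1, a)·2^{−(k−1)}`; equivalently
`Cov(X, 1_{X > a}) = (k/4)·P(Binomial(k−1, 1/2) = a)`. -/
theorem binomial_indicator_covariance (k : ℕ) (hk : 1 ≤ k) (a : ℤ) :
    (∑ j ∈ Finset.range (k + 1),
        if a < (j : ℤ) then ((j : ℝ) - (k : ℝ) / 2) * (k.choose j : ℝ) * 2 ^ (-(k : ℤ))
        else 0)
      = ((k : ℝ) / 4) * (intChoose (k - 1) a : ℝ) * 2 ^ (-((k : ℤ) - 1)) ∧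
    ((∑ j ∈ Finset.range (k + 1),
          (if a < (j : ℤ) then (j : ℝ) else 0) * (k.choose j : ℝ) * 2 ^ (-(k : ℤ)))
        - (∑ j ∈ Finset.range (k + 1), (j : ℝ) * (k.choose j : ℝ) * 2 ^ (-(k : ℤ)))
          * (∑ j ∈ Finset.range (k + 1),
              (if a < (j : ℤ) then (1 : ℝ) else 0) * (k.choose j : ℝ) * 2 ^ (-(k : ℤ))))
      = ((k : ℝ) / 4) * (intChoose (k - 1) a : ℝ) * 2 ^ (-((k : ℤ) - 1)) := by
  obtain ⟨n, rfl⟩ : ∃ n, k = n + 1 := ⟨k - 1, by omega⟩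
  set W : ℝ := (2 : ℝ) ^ (-((n + 1 : ℕ) : ℤ)) with hWdef
  have hW : W = ((2 : ℝ) ^ (n + 1))⁻¹ := by
    rw [hWdef, zpow_neg, zpow_natCast]
  have hW2 : (2 : ℝ) ^ (-(((n + 1 : ℕ) : ℤ) - 1)) = ((2 : ℝ) ^ n)⁻¹ := by
    have he : (-(((n + 1 : ℕ) : ℤ) - 1)) = -(n : ℤ) := by push_cast; ring
    rw [he, zpow_neg, zpow_natCast]
  have hE : ∑ j ∈ Finset.range (n + 1 + 1), (j : ℝ) * ((n + 1).choose j : ℝ) * W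
      = ((n : ℝ) + 1) / 2 := by
    rw [← Finset.sum_mul]
    have hs : ∑ j ∈ Finset.range (n + 2), (j : ℝ) * ((n + 1).choose j : ℝ)
        = ((n : ℝ) + 1) * 2 ^ n := by
      exact_mod_cast congrArg (Nat.cast : ℕ → ℝ) (sumA n)
    rw [show n + 1 + 1 = n + 2 from rfl, hs, hW, pow_succ]
    field_simp
  have hone : ∑ j ∈ Finset.range (n + 1 + 1), ((n + 1).choose j : ℝ) * W = 1 := by
    rw [← Finset.sum_mul]
    have hs : ∑ j ∈ Finset.range (n + 2), ((n + 1).choose j : ℝ) = 2 ^ (n + 1) := by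
      exact_mod_cast congrArg (Nat.cast : ℕ → ℝ) (Nat.sum_range_choose (n + 1))
    rw [show n + 1 + 1 = n + 2 from rfl, hs, hW]
    exact mul_inv_cancel₀ (pow_ne_zero _ two_ne_zero)
  have hfirst : (∑ j ∈ Finset.range (n + 1 + 1),
        if a < (j : ℤ) then ((j : ℝ) - ((n + 1 : ℕ) : ℝ) / 2) * ((n + 1).choose j : ℝ) * W
        else 0)
      = (((n + 1 : ℕ) : ℝ) / 4) * (intChoose (n + 1 - 1) a : ℝ)
        * 2 ^ (-(((n + 1 : ℕ) : ℤ) - 1)) := by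
    rcases lt_or_ge a 0 with ha | ha
    · have hic : (intChoose (n + 1 - 1) a : ℝ) = 0 := by
        simp [intChoose, not_le.mpr ha]
      rw [hic]
      have hind : ∀ j : ℕ, a < (j : ℤ) := fun j => lt_of_lt_of_le ha (Int.natCast_nonneg j)
      have hsplit : ∀ j ∈ Finset.range (n + 1 + 1),
          (if a < (j : ℤ) then ((j : ℝ) - ((n + 1 : ℕ) : ℝ) / 2) * ((n + 1).choose j : ℝ) * W
            else 0)
          = (j : ℝ) * ((n + 1).choose j : ℝ) * W
            - (((n : ℝ) + 1) / 2) * (((n + 1).choose j : ℝ) * W) := by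
        intro j _
        rw [if_pos (hind j)]
        push_cast
        ring
      rw [Finset.sum_congr rfl hsplit, Finset.sum_sub_distrib, hE, ← Finset.mul_sum, hone]
      ring
    · obtain ⟨m, rfl⟩ : ∃ m : ℕ, a = (m : ℤ) := ⟨a.toNat, (Int.toNat_of_nonneg ha).symm⟩
      have hic : (intChoose (n + 1 - 1) (m : ℤ) : ℝ) = (n.choose m : ℝ) := by
        simp [intChoose]
      have hBr : ∑ j ∈ Finset.range (n + 2),
          (if m < j then ((2 * j : ℝ) - ((n : ℝ) + 1)) * ((n + 1).choose j : ℝ) else 0)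
          = ((n : ℝ) + 1) * (n.choose m : ℝ) := by
        exact_mod_cast congrArg (Int.cast : ℤ → ℝ) (sumB n m)
      have hterm : ∀ j ∈ Finset.range (n + 1 + 1),
          (if (m : ℤ) < (j : ℤ) then
              ((j : ℝ) - ((n + 1 : ℕ) : ℝ) / 2) * ((n + 1).choose j : ℝ) * W else 0)
          = (W / 2) *
            (if m < j then ((2 * j : ℝ) - ((n : ℝ) + 1)) * ((n + 1).choose j : ℝ) else 0) := by
        intro j _
        simp only [Nat.cast_lt]
        split_ifs with h
        · push_cast
          ring
        · ring
      have hhalf : W = ((2 : ℝ) ^ n)⁻¹ / 2 := by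
        rw [hW, pow_succ, mul_inv]
        ring
      rw [Finset.sum_congr rfl hterm, ← Finset.mul_sum,
        show n + 1 + 1 = n + 2 from rfl, hBr, hic, hW2, hhalf]
      push_cast
      ring
  refine ⟨hfirst, ?_⟩
  rw [hE, Finset.mul_sum, ← Finset.sum_sub_distrib]
  have hpt : ∀ j ∈ Finset.range (n + 1 + 1),
      ((if a < (j : ℤ) then (j : ℝ) else 0) * ((n + 1).choose j : ℝ) * W
        - ((n : ℝ) + 1) / 2 * ((if a < (j : ℤ) then (1 : ℝ) else 0) * ((n + 1).choose j : ℝ) * W))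
      = (if a < (j : ℤ) then
          ((j : ℝ) - ((n + 1 : ℕ) : ℝ) / 2) * ((n + 1).choose j : ℝ) * W else 0) := by
    intro j _
    split_ifs with h
    · push_cast
      ring
    · ring
  rw [Finset.sum_congr rfl hpt]
  exact hfirst
end

section
/- For every integer n ≥ 2, Cov(n, 1) = 2^{−n}·C(n−2, ⌊(n−1)/2⌋). Moreover, there exists a constant C > 0 such that for all n ≥ 3, |Cov(n, 1) − √(1/(8π(n−2)))| ≤ C·n^{−3/2}. -/
/-- The majority fold-covariance
`Cov(n, m) = 2^{−n}·∑_{j=0}^{m−1} C(m−1, j)²·C(n−2m, ⌊(n−m)/2⌋ − j)`. -/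
noncomputable def majCov (n m : ℕ) : ℝ :=
  2 ^ (-(n : ℤ)) * ∑ j ∈ Finset.range m,
    ((m - 1).choose j : ℝ) ^ 2 *
      (intChoose (n - 2 * m) ((((n - m) / 2 : ℕ) : ℤ) - (j : ℤ)) : ℝ)

open Real

namespace MajAux

/-- normalized central binomial coefficient -/
noncomputable def bb (k : ℕ) : ℝ := (Nat.centralBinom k : ℝ) / 4 ^ k

lemma bb_pos (k : ℕ) : 0 < bb k := by
  have h := Nat.centralBinom_pos k
  have : (0:ℝ) < (Nat.centralBinom k : ℝ) := by exact_mod_cast h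
  unfold bb; positivity

lemma centralBinom_cast (k : ℕ) :
    (Nat.centralBinom k : ℝ) * ((k.factorial : ℝ) * (k.factorial : ℝ)) =
      ((2 * k).factorial : ℝ) := by
  have h1 : 2 * k - k = k := by omega
  have := Nat.choose_mul_factorial_mul_factorial (show k ≤ 2 * k by omega)
  rw [h1] at this
  have : Nat.centralBinom k * k.factorial * k.factorial = (2 * k).factorial := this
  exact_mod_cast by rw [← this]; ring

lemma bb_sq_W (k : ℕ) : bb k ^ 2 * (2 * (k:ℝ) + 1) * Real.Wallis.W k = 1 := by
  have hW := Real.Wallis.W_eq_factorial_ratio k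
  have hc := centralBinom_cast k
  have hf : (0:ℝ) < (k.factorial : ℝ) := by exact_mod_cast k.factorial_pos
  have hF : (0:ℝ) < ((2 * k).factorial : ℝ) := by exact_mod_cast (2 * k).factorial_pos
  have h4 : (0:ℝ) < (4:ℝ) ^ k := by positivity
  have hcR : (Nat.centralBinom k : ℝ) = ((2 * k).factorial : ℝ) / ((k.factorial : ℝ))^2 := by
    field_simp
    nlinarith [hc]
  have hpow : (2:ℝ) ^ (4 * k) = ((4:ℝ) ^ k) ^ 2 := by
    rw [show (4:ℝ) = 2 ^ 2 by norm_num, ← pow_mul, ← pow_mul]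
    congr 1
    omega
  unfold bb
  rw [hcR, hW, hpow]
  have h2k1 : (0:ℝ) < 2 * (k:ℝ) + 1 := by positivity
  field_simp

lemma bb_sq_lower (k : ℕ) : 2 ≤ bb k ^ 2 * (2 * (k:ℝ) + 1) * π := by
  have h1 := Real.Wallis.W_le k
  have h2 := bb_sq_W k
  have hb : (0:ℝ) ≤ bb k ^ 2 * (2 * (k:ℝ) + 1) := by positivity
  have := mul_le_mul_of_nonneg_left h1 hb
  nlinarith [this, h2]

lemma bb_sq_upper (k : ℕ) : bb k ^ 2 * (2 * (k:ℝ) + 1) ^ 2 * π ≤ 2 * (2 * (k:ℝ) + 2) := by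
  have h1 := Real.Wallis.le_W k
  have h2 := bb_sq_W k
  have hb : (0:ℝ) ≤ bb k ^ 2 * (2 * (k:ℝ) + 1) := by positivity
  have hk2 : (0:ℝ) < 2 * (k:ℝ) + 2 := by positivity
  have h1' : (2 * (k:ℝ) + 1) * (π / 2) ≤ Real.Wallis.W k * (2 * (k:ℝ) + 2) := by
    rw [div_mul_eq_mul_div, div_le_iff₀ hk2] at h1
    linarith
  calc bb k ^ 2 * (2 * (k:ℝ) + 1) ^ 2 * π
      = 2 * (bb k ^ 2 * (2 * (k:ℝ) + 1) * ((2 * (k:ℝ) + 1) * (π / 2))) := by ring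
    _ ≤ 2 * (bb k ^ 2 * (2 * (k:ℝ) + 1) * (Real.Wallis.W k * (2 * (k:ℝ) + 2))) := by
        have := mul_le_mul_of_nonneg_left h1' hb
        linarith
    _ = 2 * ((bb k ^ 2 * (2 * (k:ℝ) + 1) * Real.Wallis.W k) * (2 * (k:ℝ) + 2)) := by ring
    _ = 2 * (2 * (k:ℝ) + 2) := by rw [h2]; ring

/-- `dd m = C(m, ⌈m/2⌉) / 2^m` -/
noncomputable def dd (m : ℕ) : ℝ := (Nat.choose m ((m + 1) / 2) : ℝ) / 2 ^ m

lemma dd_nonneg (m : ℕ) : 0 ≤ dd m := by unfold dd; positivity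

lemma dd_even (k : ℕ) : dd (2 * k) = bb k := by
  unfold dd bb
  have h : (2 * k + 1) / 2 = k := by omega
  rw [h, ← Nat.centralBinom_eq_two_mul_choose]
  congr 1
  rw [pow_mul]; norm_num

lemma choose_odd_key (k : ℕ) :
    (k + 1) * Nat.choose (2 * k + 1) (k + 1) = (2 * k + 1) * Nat.centralBinom k := by
  have h1 := Nat.succ_mul_centralBinom_succ k
  have hsym : Nat.choose (2 * k + 1) k = Nat.choose (2 * k + 1) (k + 1) := by
    have := Nat.choose_symm (show k + 1 ≤ 2 * k + 1 by omega)
    have h2 : 2 * k + 1 - (k + 1) = k := by omega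
    rw [h2] at this
    exact this
  have h2 : Nat.centralBinom (k + 1) = 2 * Nat.choose (2 * k + 1) (k + 1) := by
    have h3 : Nat.centralBinom (k + 1) = Nat.choose (2 * k + 1) k + Nat.choose (2 * k + 1) (k + 1) := by
      have : 2 * (k + 1) = (2 * k + 1) + 1 := by ring
      rw [Nat.centralBinom_eq_two_mul_choose, this]
      exact Nat.choose_succ_succ (2 * k + 1) k
    rw [h3, hsym]; ring
  rw [h2] at h1
  have h4 : 2 * ((k + 1) * Nat.choose (2 * k + 1) (k + 1)) =
      2 * ((2 * k + 1) * Nat.centralBinom k) := by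
    calc 2 * ((k + 1) * Nat.choose (2 * k + 1) (k + 1))
        = (k + 1) * (2 * Nat.choose (2 * k + 1) (k + 1)) := by ring
      _ = 2 * (2 * k + 1) * Nat.centralBinom k := h1
      _ = 2 * ((2 * k + 1) * Nat.centralBinom k) := by ring
  omega

lemma dd_odd (k : ℕ) : dd (2 * k + 1) = bb k * ((2 * (k:ℝ) + 1) / (2 * k + 2)) := by
  unfold dd bb
  have h : (2 * k + 1 + 1) / 2 = k + 1 := by omega
  rw [h]
  have hk := choose_odd_key k
  have hkR : ((k:ℝ) + 1) * (Nat.choose (2 * k + 1) (k + 1) : ℝ) =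
      (2 * (k:ℝ) + 1) * (Nat.centralBinom k : ℝ) := by exact_mod_cast hk
  have hk1 : (0:ℝ) < (k:ℝ) + 1 := by positivity
  have hC : (Nat.choose (2 * k + 1) (k + 1) : ℝ) =
      (2 * (k:ℝ) + 1) * (Nat.centralBinom k : ℝ) / ((k:ℝ) + 1) := by
    rw [eq_div_iff hk1.ne']
    linarith [hkR]
  rw [hC]
  have hpow : (2:ℝ) ^ (2 * k + 1) = 4 ^ k * 2 := by
    rw [pow_succ, pow_mul]; norm_num
  rw [hpow]
  have h4 : (0:ℝ) < (4:ℝ) ^ k := by positivity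
  field_simp

lemma dd_sq_le (m : ℕ) (hm : 1 ≤ m) : dd m ^ 2 ≤ 2 / (π * m) := by
  have hπ := Real.pi_gt_three
  rcases Nat.even_or_odd m with ⟨k, hk⟩ | ⟨k, hk⟩
  · subst hk
    have hk1 : 1 ≤ k := by omega
    have hkR : (1:ℝ) ≤ (k:ℝ) := by exact_mod_cast hk1
    rw [show k + k = 2 * k by ring, dd_even]
    have hu := bb_sq_upper k
    have hb := (bb_pos k).le
    have hm' : (0:ℝ) < π * (2 * k) := by positivity
    push_cast
    rw [le_div_iff₀ hm']
    nlinarith [hu, sq_nonneg (bb k)]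
  · subst hk
    rw [dd_odd]
    have hu := bb_sq_upper k
    have hm' : (0:ℝ) < π * (2 * k + 1) := by positivity
    push_cast
    rw [le_div_iff₀ hm']
    have hk2 : (0:ℝ) < 2 * (k:ℝ) + 2 := by positivity
    have key : (bb k * ((2 * (k:ℝ) + 1) / (2 * k + 2))) ^ 2 =
        bb k ^ 2 * (2 * (k:ℝ) + 1) ^ 2 / (2 * (k:ℝ) + 2) ^ 2 := by
      field_simp
    rw [key, div_mul_eq_mul_div, div_le_iff₀ (by positivity)]
    nlinarith [hu, sq_nonneg (bb k), Real.pi_pos]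

lemma dd_sq_ge (m : ℕ) (hm : 1 ≤ m) : 2 / (π * m) - dd m ^ 2 ≤ 4 / (3 * m ^ 2) := by
  have hπ := Real.pi_gt_three
  have hπ4 := Real.pi_le_four
  rcases Nat.even_or_odd m with ⟨k, hk⟩ | ⟨k, hk⟩
  · subst hk
    have hk1 : 1 ≤ k := by omega
    have hkR : (1:ℝ) ≤ (k:ℝ) := by exact_mod_cast hk1
    rw [show k + k = 2 * k by ring, dd_even]
    have hl := bb_sq_lower k
    have hm' : (0:ℝ) < π * (2 * k) := by positivity
    push_cast
    rw [div_sub' hm'.ne', div_le_div_iff₀ hm' (by positivity)]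
    have hu := bb_sq_upper k
    have hk0 : (0:ℝ) < (k:ℝ) := by linarith
    have hY : bb k ^ 2 * π * (k:ℝ) ≤ 2 := by
      nlinarith [hu, hk0, sq_nonneg (2*(k:ℝ)+1)]
    nlinarith [mul_le_mul_of_nonneg_left hl (show (0:ℝ) ≤ 12*(k:ℝ)^2 by positivity),
      mul_le_mul_of_nonneg_left hY (show (0:ℝ) ≤ 12*(k:ℝ) by positivity),
      mul_nonneg (sub_nonneg.mpr hπ.le) hk0.le]
  · subst hk
    rw [dd_odd]
    have hl := bb_sq_lower k
    have hm' : (0:ℝ) < π * (2 * k + 1) := by positivity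
    have hk2 : (0:ℝ) < 2 * (k:ℝ) + 2 := by positivity
    have key : (bb k * ((2 * (k:ℝ) + 1) / (2 * k + 2))) ^ 2 =
        bb k ^ 2 * (2 * (k:ℝ) + 1) ^ 2 / (2 * (k:ℝ) + 2) ^ 2 := by
      field_simp
    rw [key]
    push_cast
    rw [div_sub_div _ _ hm'.ne' (by positivity : ((2:ℝ) * k + 2) ^ 2 ≠ 0),
      div_le_div_iff₀ (by positivity) (by positivity)]
    have hu := bb_sq_upper k
    have A := mul_le_mul_of_nonneg_left hl
      (show (0:ℝ) ≤ 3*(2*(k:ℝ)+1)^2*(2*(k:ℝ)+2)^2 by positivity)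
    have B := mul_le_mul_of_nonneg_left hu
      (show (0:ℝ) ≤ 3*(2*(k:ℝ)+1)*(4*(k:ℝ)+3) by positivity)
    have C := mul_le_mul_of_nonneg_left (show (4*(k:ℝ)+3) ≤ 2*(2*(k:ℝ)+2) by linarith)
      (show (0:ℝ) ≤ 6*(2*(k:ℝ)+1)*(2*(k:ℝ)+2) by positivity)
    have D := mul_le_mul_of_nonneg_left hπ.le
      (show (0:ℝ) ≤ 4*(2*(k:ℝ)+1)*(2*(k:ℝ)+2)^2 by positivity)
    nlinarith [A, B, C, D]

lemma sqrt_sub_le {a d : ℝ} (hd : 0 ≤ d) (ha : 0 < a) (hle : d ^ 2 ≤ a) :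
    Real.sqrt a - d ≤ (a - d ^ 2) / Real.sqrt a := by
  have ht : 0 < Real.sqrt a := Real.sqrt_pos.mpr ha
  have ht2 : Real.sqrt a ^ 2 = a := Real.sq_sqrt ha.le
  have hdt : d ≤ Real.sqrt a := by nlinarith
  rw [le_div_iff₀ ht]
  nlinarith

lemma sqrt_four_mul (x : ℝ) (hx : 0 ≤ x) : Real.sqrt (4 * x) = 2 * Real.sqrt x := by
  rw [Real.sqrt_mul (by norm_num : (0:ℝ) ≤ 4)]
  congr 1
  rw [show (4:ℝ) = 2 ^ 2 by norm_num, Real.sqrt_sq (by norm_num : (0:ℝ) ≤ 2)]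

lemma dd_est (m : ℕ) (hm : 1 ≤ m) :
    |dd m - Real.sqrt (2 / (π * m))| ≤ 3 / (m * Real.sqrt m) := by
  have hπ := Real.pi_gt_three
  have hπ4 := Real.pi_le_four
  have hmR : (1:ℝ) ≤ (m:ℝ) := by exact_mod_cast hm
  have hm0 : (0:ℝ) < (m:ℝ) := by linarith
  set a := 2 / (π * (m:ℝ)) with ha_def
  have ha : 0 < a := by positivity
  have hsq := dd_sq_le m hm
  have hge := dd_sq_ge m hm
  have hd := dd_nonneg m
  have h1 : dd m ≤ Real.sqrt a := (Real.le_sqrt hd ha.le).mpr hsq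
  have hsm : 0 < Real.sqrt m := Real.sqrt_pos.mpr hm0
  rw [abs_of_nonpos (by linarith)]
  have h2 : Real.sqrt a - dd m ≤ (a - dd m ^ 2) / Real.sqrt a :=
    sqrt_sub_le hd ha hsq
  -- lower bound on sqrt a : sqrt a ≥ 1/(2 sqrt m)
  have hal : 1 / (4 * (m:ℝ)) ≤ a := by
    rw [ha_def, div_le_div_iff₀ (by positivity) (by positivity)]
    nlinarith
  have hsa : 1 / (2 * Real.sqrt m) ≤ Real.sqrt a := by
    have := Real.sqrt_le_sqrt hal
    calc 1 / (2 * Real.sqrt m) = Real.sqrt (1 / (4 * m)) := by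
          rw [one_div, one_div, Real.sqrt_inv, sqrt_four_mul _ hm0.le]
      _ ≤ Real.sqrt a := this
  have hsa0 : 0 < Real.sqrt a := Real.sqrt_pos.mpr ha
  have h3 : (a - dd m ^ 2) / Real.sqrt a ≤ (4 / (3 * m ^ 2)) * (2 * Real.sqrt m) := by
    have hnum : 0 ≤ a - dd m ^ 2 := by linarith
    calc (a - dd m ^ 2) / Real.sqrt a
        ≤ (a - dd m ^ 2) / (1 / (2 * Real.sqrt m)) :=
          div_le_div_of_nonneg_left hnum (by positivity) hsa
      _ = (a - dd m ^ 2) * (2 * Real.sqrt m) := by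
          rw [div_div_eq_mul_div, div_one]
      _ ≤ (4 / (3 * m ^ 2)) * (2 * Real.sqrt m) := by
          exact mul_le_mul_of_nonneg_right hge (by positivity)
  have h4 : (4 / (3 * (m:ℝ) ^ 2)) * (2 * Real.sqrt m) ≤ 3 / (m * Real.sqrt m) := by
    rw [div_mul_eq_mul_div, div_le_div_iff₀ (by positivity) (by positivity)]
    have hs2 : Real.sqrt m ^ 2 = (m:ℝ) := Real.sq_sqrt hm0.le
    nlinarith [hsm, hs2, sq_nonneg (Real.sqrt m)]
  calc -(dd m - Real.sqrt a) = Real.sqrt a - dd m := by ring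
    _ ≤ (a - dd m ^ 2) / Real.sqrt a := h2
    _ ≤ (4 / (3 * m ^ 2)) * (2 * Real.sqrt m) := h3
    _ ≤ 3 / (m * Real.sqrt m) := h4

lemma majCov_one (n : ℕ) (hn : 2 ≤ n) :
    majCov n 1 = ((n - 2).choose ((n - 1) / 2) : ℝ) * 2 ^ (-(n : ℤ)) := by
  unfold majCov
  rw [Finset.sum_range_one]
  have h1 : n - 2 * 1 = n - 2 := by omega
  have h2 : n - 1 = n - 1 := rfl
  simp only [Nat.sub_self, Nat.choose_self, Nat.cast_one, one_pow, Nat.cast_ofNat,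
    CharP.cast_eq_zero, sub_zero, h1]
  rw [intChoose]
  rw [if_pos (by positivity)]
  simp only [Int.toNat_natCast]
  ring

end MajAux

/-- Part (B): the exact expression `Cov(n, 1) = 2^{−n}·C(n−2, ⌊(n−1)/2⌋)` for all `n ≥ 2`,
and the asymptotics `|Cov(n, 1) − √(1/(8π(n−2)))| ≤ C·n^{−3/2}` for all `n ≥ 3`. -/
theorem majority_cov_leave_one_out :
    (∀ n : ℕ, 2 ≤ n → majCov n 1 = ((n - 2).choose ((n - 1) / 2) : ℝ) * 2 ^ (-(n : ℤ))) ∧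
    ∃ C : ℝ, 0 < C ∧ ∀ n : ℕ, 3 ≤ n →
      |majCov n 1 - Real.sqrt (1 / (8 * Real.pi * ((n : ℝ) - 2)))|
        ≤ C * (n : ℝ) ^ (-(3 : ℝ) / 2) := by
  constructor
  · exact fun n hn => MajAux.majCov_one n hn
  · refine ⟨5, by norm_num, fun n hn => ?_⟩
    have hn2 : 2 ≤ n := by omega
    set m : ℕ := n - 2 with hm_def
    have hm1 : 1 ≤ m := by omega
    have hmn : n = m + 2 := by omega
    have hπ := Real.pi_gt_three
    have hπ4 := Real.pi_le_four
    have hmR : (1:ℝ) ≤ (m:ℝ) := by exact_mod_cast hm1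
    have hm0 : (0:ℝ) < (m:ℝ) := by linarith
    have hn0 : (0:ℝ) < (n:ℝ) := by positivity
    have hnm : (n:ℝ) = (m:ℝ) + 2 := by exact_mod_cast hmn
    -- rewrite majCov
    have hmaj : majCov n 1 = MajAux.dd m / 4 := by
      rw [MajAux.majCov_one n hn2, MajAux.dd]
      have hc : (n - 1) / 2 = (m + 1) / 2 := by omega
      rw [hc]
      have hz : (2:ℝ) ^ (-(n : ℤ)) = ((2:ℝ) ^ n)⁻¹ := by
        rw [zpow_neg, zpow_natCast]
      rw [hz, hmn]
      rw [pow_add]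
      norm_num
      ring
    -- rewrite the target
    have htarget : Real.sqrt (1 / (8 * Real.pi * ((n : ℝ) - 2))) =
        Real.sqrt (2 / (Real.pi * m)) / 4 := by
      have h1 : 1 / (8 * Real.pi * ((n : ℝ) - 2)) = (2 / (Real.pi * m)) / 16 := by
        rw [hnm]; field_simp; ring_nf; simp [hm0.ne']
      rw [h1, Real.sqrt_div (by positivity) 16]
      congr 1
      rw [show (16:ℝ) = 4 ^ 2 by norm_num, Real.sqrt_sq (by norm_num : (0:ℝ) ≤ 4)]
    rw [hmaj, htarget]
    have hest := MajAux.dd_est m hm1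
    have habs : |MajAux.dd m / 4 - Real.sqrt (2 / (Real.pi * m)) / 4| =
        |MajAux.dd m - Real.sqrt (2 / (Real.pi * m))| / 4 := by
      rw [show MajAux.dd m / 4 - Real.sqrt (2 / (Real.pi * m)) / 4 =
        (MajAux.dd m - Real.sqrt (2 / (Real.pi * m))) / 4 by ring, abs_div]
      norm_num
    rw [habs]
    -- express the rpow
    have hrpow : (n : ℝ) ^ (-(3 : ℝ) / 2) = 1 / ((n:ℝ) * Real.sqrt n) := by
      rw [show -(3:ℝ)/2 = -(3/2) by norm_num, Real.rpow_neg hn0.le]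
      rw [show (3:ℝ)/2 = 1 + 1/2 by norm_num, Real.rpow_add hn0, Real.rpow_one,
        ← Real.sqrt_eq_rpow, one_div]
    rw [hrpow]
    have hsm : 0 < Real.sqrt m := Real.sqrt_pos.mpr hm0
    have hsn : 0 < Real.sqrt n := Real.sqrt_pos.mpr hn0
    have hsq_m : Real.sqrt m ^ 2 = (m:ℝ) := Real.sq_sqrt hm0.le
    have hsn_le : Real.sqrt n ≤ 2 * Real.sqrt m := by
      have h4m : (n:ℝ) ≤ 4 * m := by rw [hnm]; linarith
      calc Real.sqrt n ≤ Real.sqrt (4 * m) := Real.sqrt_le_sqrt h4m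
        _ = 2 * Real.sqrt m := MajAux.sqrt_four_mul _ hm0.le
    have hn3 : (n:ℝ) ≤ 3 * m := by rw [hnm]; linarith
    calc |MajAux.dd m - Real.sqrt (2 / (Real.pi * m))| / 4
        ≤ (3 / (m * Real.sqrt m)) / 4 := by linarith [hest]
      _ ≤ 5 * (1 / ((n:ℝ) * Real.sqrt n)) := by
          rw [div_div, mul_one_div, div_le_div_iff₀ (by positivity) (by positivity)]
          nlinarith [mul_le_mul hn3 hsn_le hsn.le (by positivity : (0:ℝ) ≤ 3 * m),
            mul_pos hm0 hsm]
    done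
end

section
/- There exists a constant C > 0 such that for all even integers n ≥ 4, |Cov(n, n/2) − 1/(π(n−2))| ≤ C/n². -/
open Filter Topology Real
open scoped Nat

noncomputable def acb (K : ℕ) : ℝ := (Nat.centralBinom K : ℝ) / 4 ^ K

lemma acb_pos (K : ℕ) : 0 < acb K :=
  div_pos (by exact_mod_cast Nat.centralBinom_pos K) (by positivity)

lemma acb_sq_mul_W (K : ℕ) : acb K ^ 2 * (2 * K + 1) * Real.Wallis.W K = 1 := by
  rw [Real.Wallis.W_eq_factorial_ratio]
  have hcb : (Nat.centralBinom K : ℝ) = (2 * K)! / (K ! * K !) := by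
    rw [Nat.centralBinom, Nat.cast_choose ℝ (by omega : K ≤ 2 * K)]
    rw [show 2 * K - K = K by omega]
  have h16 : (2 : ℝ) ^ (4 * K) = (4 ^ K) ^ 2 := by
    rw [show 4 * K = (2 * K) * 2 by ring, pow_mul, show (2:ℝ)^(2*K) = 4^K by
      rw [pow_mul]; norm_num]
  have hf : (0:ℝ) < (K ! : ℝ) := by exact_mod_cast K.factorial_pos
  have hf2 : (0:ℝ) < ((2*K)! : ℝ) := by exact_mod_cast (2*K).factorial_pos
  rw [acb, hcb, h16]
  field_simp

lemma acb_sq_eq (K : ℕ) : acb K ^ 2 * (2 * K + 1) = 1 / Real.Wallis.W K := by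
  have h := acb_sq_mul_W K
  have hW := Real.Wallis.W_pos K
  field_simp at h ⊢
  linarith

lemma tendsto_g : Tendsto (fun K : ℕ => acb K ^ 2 * ((K : ℝ) + 1 / 2)) atTop (𝓝 (1 / π)) := by
  have h : ∀ K : ℕ, acb K ^ 2 * ((K : ℝ) + 1 / 2) = 1 / (2 * Real.Wallis.W K) := by
    intro K
    have h := acb_sq_eq K
    have hW := Real.Wallis.W_pos K
    field_simp at h ⊢
    nlinarith
  have h2 : Tendsto (fun K : ℕ => 1 / (2 * Real.Wallis.W K)) atTop (𝓝 (1 / π)) := by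
    have := (Real.Wallis.tendsto_W_nhds_pi_div_two.const_mul (2:ℝ))
    have h3 : (2:ℝ) * (π / 2) = π := by ring
    rw [h3] at this
    simpa [one_div] using this.inv₀ Real.pi_ne_zero
  exact h2.congr (fun K => (h K).symm)

lemma tendsto_acb_sq : Tendsto (fun K : ℕ => acb K ^ 2) atTop (𝓝 0) := by
  have h1 : Tendsto (fun K : ℕ => ((K : ℝ) + 1 / 2)⁻¹) atTop (𝓝 0) := by
    apply Tendsto.inv_tendsto_atTop
    exact tendsto_atTop_add_const_right _ _ tendsto_natCast_atTop_atTop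
  have h2 := tendsto_g.mul h1
  rw [mul_zero] at h2
  apply h2.congr
  intro K
  have : ((K:ℝ) + 1/2) ≠ 0 := by positivity
  field_simp

lemma tendsto_f : Tendsto (fun K : ℕ => acb K ^ 2 * (K : ℝ)) atTop (𝓝 (1 / π)) := by
  have h := tendsto_g.sub (tendsto_acb_sq.mul_const (1/2 : ℝ))
  rw [zero_mul, sub_zero] at h
  apply h.congr
  intro K
  ring

lemma acb_succ (K : ℕ) : acb (K + 1) = acb K * ((2 * K + 1) / (2 * K + 2)) := by
  have h := Nat.succ_mul_centralBinom_succ K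
  have hc : ((K:ℝ) + 1) * (Nat.centralBinom (K + 1) : ℝ)
      = 2 * (2 * K + 1) * (Nat.centralBinom K : ℝ) := by exact_mod_cast h
  have hK : ((K:ℝ) + 1) ≠ 0 := by positivity
  rw [acb, acb, pow_succ]
  field_simp
  linear_combination 2 * hc

lemma f_mono : Monotone (fun K : ℕ => acb K ^ 2 * (K : ℝ)) := by
  apply monotone_nat_of_le_succ
  intro K
  simp only [acb_succ, mul_pow, div_pow, Nat.cast_succ]
  have hd : (0:ℝ) < (2*(K:ℝ)+2)^2 := by positivity
  have hx : (0:ℝ) ≤ acb K ^ 2 := sq_nonneg _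
  rw [show acb K ^2 * ((2*(K:ℝ)+1)^2/(2*(K:ℝ)+2)^2) * ((K:ℝ)+1)
      = acb K^2 * ((2*(K:ℝ)+1)^2*((K:ℝ)+1)/(2*(K:ℝ)+2)^2) by ring]
  apply mul_le_mul_of_nonneg_left _ hx
  rw [le_div_iff₀ hd]
  nlinarith [Nat.cast_nonneg (α := ℝ) K]

lemma g_anti : Antitone (fun K : ℕ => acb K ^ 2 * ((K : ℝ) + 1 / 2)) := by
  apply antitone_nat_of_succ_le
  intro K
  simp only [acb_succ, mul_pow, div_pow, Nat.cast_succ]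
  have hd : (0:ℝ) < (2*(K:ℝ)+2)^2 := by positivity
  have hx : (0:ℝ) ≤ acb K ^ 2 := sq_nonneg _
  rw [show acb K ^2 * ((2*(K:ℝ)+1)^2/(2*(K:ℝ)+2)^2) * ((K:ℝ)+1+1/2)
      = acb K^2 * ((2*(K:ℝ)+1)^2*((K:ℝ)+1+1/2)/(2*(K:ℝ)+2)^2) by ring]
  apply mul_le_mul_of_nonneg_left _ hx
  rw [div_le_iff₀ hd]
  nlinarith [Nat.cast_nonneg (α := ℝ) K]

lemma acb_sq_upper (K : ℕ) : acb K ^ 2 * (K : ℝ) ≤ 1 / π :=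
  f_mono.ge_of_tendsto tendsto_f K

lemma acb_sq_lower (K : ℕ) : 1 / π ≤ acb K ^ 2 * ((K : ℝ) + 1 / 2) :=
  g_anti.le_of_tendsto tendsto_g K

lemma key_even (x k : ℝ) (hk : 1 ≤ k) (hx : 0 ≤ x)
    (h1 : x * k ≤ 1 / π) (h2 : 1 / π ≤ x * (k + 1 / 2)) :
    |x / 4 - 1 / (π * (4 * k - 2))| ≤ 8 / (4 * k) ^ 2 := by
  have hπ := Real.pi_gt_three
  have hπ4 := Real.pi_lt_d2
  have hA : (0:ℝ) < π * (4 * k - 2) := by nlinarith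
  have hB : (0:ℝ) < π * (4 * k + 2) := by nlinarith
  have hC : (0:ℝ) < π * (4 * k) := by nlinarith
  rw [abs_sub_le_iff]
  have hxu : x / 4 ≤ 1 / (π * (4 * k)) := by
    rw [le_div_iff₀ hC]
    have : x * k * π ≤ (1/π) * π := by nlinarith
    rw [one_div, inv_mul_cancel₀ Real.pi_ne_zero] at this
    nlinarith
  have hxl : 1 / (π * (4 * k + 2)) ≤ x / 4 := by
    rw [div_le_iff₀ hB]
    have : (1/π) * π ≤ x * (k + 1/2) * π := by nlinarith
    rw [one_div, inv_mul_cancel₀ Real.pi_ne_zero] at this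
    nlinarith
  constructor
  · have hrs : (0:ℝ) ≤ 8 / (4 * k) ^ 2 := by positivity
    have h3 : 1 / (π * (4 * k)) ≤ 1 / (π * (4 * k - 2)) := by
      apply one_div_le_one_div_of_le hA
      nlinarith
    linarith
  · have h3 : 1 / (π * (4 * k - 2)) - 1 / (π * (4 * k + 2)) ≤ 8 / (4 * k) ^ 2 := by
      rw [div_sub_div _ _ (ne_of_gt hA) (ne_of_gt hB), div_le_div_iff₀ (by nlinarith) (by positivity)]
      have h3p : 3 * π ≤ π * π := by nlinarith
      nlinarith [mul_le_mul_of_nonneg_right h3p (show (0:ℝ) ≤ 16 * k ^ 2 - 4 by nlinarith),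
        mul_le_mul_of_nonneg_left (show (1:ℝ) ≤ k ^ 2 by nlinarith) Real.pi_pos.le]
    linarith

lemma key_odd (x k : ℝ) (hk : 1 ≤ k) (hx : 0 ≤ x)
    (h1 : x * k ≤ 1 / π) (h2 : 1 / π ≤ x * (k + 1 / 2)) :
    |x / 4 - 1 / (π * (4 * k))| ≤ 8 / (4 * k + 2) ^ 2 := by
  have hπ := Real.pi_gt_three
  have hπ4 := Real.pi_lt_d2
  have hB : (0:ℝ) < π * (4 * k + 2) := by nlinarith
  have hC : (0:ℝ) < π * (4 * k) := by nlinarith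
  rw [abs_sub_le_iff]
  have hxu : x / 4 ≤ 1 / (π * (4 * k)) := by
    rw [le_div_iff₀ hC]
    have : x * k * π ≤ (1/π) * π := by nlinarith
    rw [one_div, inv_mul_cancel₀ Real.pi_ne_zero] at this
    nlinarith
  have hxl : 1 / (π * (4 * k + 2)) ≤ x / 4 := by
    rw [div_le_iff₀ hB]
    have : (1/π) * π ≤ x * (k + 1/2) * π := by nlinarith
    rw [one_div, inv_mul_cancel₀ Real.pi_ne_zero] at this
    nlinarith
  constructor
  · have hrs : (0:ℝ) ≤ 8 / (4 * k + 2) ^ 2 := by positivity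
    linarith
  · have h3 : 1 / (π * (4 * k)) - 1 / (π * (4 * k + 2)) ≤ 8 / (4 * k + 2) ^ 2 := by
      rw [div_sub_div _ _ (ne_of_gt hC) (ne_of_gt hB), div_le_div_iff₀ (by nlinarith) (by positivity)]
      have h3p : 3 * π ≤ π * π := by nlinarith
      nlinarith [mul_le_mul_of_nonneg_right h3p (sq_nonneg k),
        mul_le_mul_of_nonneg_right h3p (show (0:ℝ) ≤ k by linarith),
        mul_le_mul_of_nonneg_left (show (1:ℝ) ≤ k ^ 2 by nlinarith) Real.pi_pos.le,
        mul_le_mul_of_nonneg_left hk Real.pi_pos.le]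
    linarith

lemma intChoose_zero_ne (z : ℤ) (hz : z ≠ 0) : intChoose 0 z = 0 := by
  rw [intChoose]
  split_ifs with h
  · exact Nat.choose_eq_zero_of_lt (by omega)
  · rfl

lemma choose_central_even (k : ℕ) :
    Nat.centralBinom (k + 1) = 2 * ((2 * k + 1).choose (k + 1)) := by
  rw [Nat.centralBinom, show 2 * (k + 1) = (2 * k + 1) + 1 by ring, Nat.choose_succ_succ']
  have h : (2 * k + 1).choose k = (2 * k + 1).choose (k + 1) := by
    rw [← Nat.choose_symm (show k + 1 ≤ 2 * k + 1 by omega),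
      show 2 * k + 1 - (k + 1) = k by omega]
  omega

lemma majCov_red (m : ℕ) (hm : 1 ≤ m) :
    majCov (2 * m) m = 2 ^ (-((2 * m : ℕ) : ℤ)) * ((m - 1).choose (m / 2) : ℝ) ^ 2 := by
  rw [majCov]
  have e0 : 2 * m - 2 * m = 0 := by omega
  have e1 : 2 * m - m = m := by omega
  rw [e0, e1]
  congr 1
  rw [Finset.sum_eq_single (m / 2)]
  · rw [sub_self]
    simp [intChoose]
  · intro b _ hb
    rw [intChoose_zero_ne _ (by omega)]
    simp
  · intro h
    exact absurd (Finset.mem_range.mpr (Nat.div_lt_self (by omega) one_lt_two)) h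

lemma two_pow_4K (K : ℕ) : (2:ℝ) ^ (4 * K) = ((4:ℝ) ^ K) ^ 2 := by
  rw [show 4 * K = (2 * K) * 2 by ring, pow_mul, show (2:ℝ)^(2*K) = 4^K by
    rw [pow_mul]; norm_num]

lemma cb_half (K : ℕ) (hK : 1 ≤ K) :
    Nat.centralBinom K = 2 * ((K + K - 1).choose ((K + K) / 2)) := by
  obtain ⟨k, rfl⟩ : ∃ k, K = k + 1 := ⟨K - 1, by omega⟩
  rw [show k + 1 + (k + 1) - 1 = 2 * k + 1 by omega,
    show (k + 1 + (k + 1)) / 2 = k + 1 by omega]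
  exact choose_central_even k

/-- Part (E), two-fold cross-validation: there is `C > 0` such that for all even `n ≥ 4`,
`|Cov(n, n/2) − 1/(π(n−2))| ≤ C/n²`. -/
theorem majority_cov_two_fold :
    ∃ C : ℝ, 0 < C ∧ ∀ n : ℕ, 4 ≤ n → Even n →
      |majCov n (n / 2) - 1 / (Real.pi * ((n : ℝ) - 2))| ≤ C / (n : ℝ) ^ 2 := by
  refine ⟨8, by norm_num, ?_⟩
  intro n hn hev
  obtain ⟨t, rfl⟩ := hev
  have h2t : t + t = 2 * t := by omega
  rw [h2t] at hn ⊢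
  rw [show 2 * t / 2 = t by omega]
  rw [majCov_red t (by omega)]
  rcases Nat.even_or_odd t with ⟨K, rfl⟩ | ⟨K, rfl⟩
  · -- even: t = K + K, n = 4K
    have hK : 1 ≤ K := by omega
    have hcbR : (((K + K) - 1).choose ((K + K) / 2) : ℝ) = (Nat.centralBinom K : ℝ) / 2 := by
      have h := cb_half K hK
      have : (Nat.centralBinom K : ℝ) = 2 * (((K + K) - 1).choose ((K + K) / 2) : ℝ) := by
        exact_mod_cast congrArg (Nat.cast : ℕ → ℝ) h
      linarith
    have hval : (2:ℝ) ^ (-((2 * (K + K) : ℕ) : ℤ)) * (((K + K) - 1).choose ((K + K) / 2) : ℝ) ^ 2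
        = acb K ^ 2 / 4 := by
      rw [hcbR, zpow_neg, zpow_natCast, show 2 * (K + K) = 4 * K by ring, two_pow_4K, acb]
      have h4 : (0:ℝ) < (4:ℝ) ^ K := by positivity
      field_simp
      ring_nf
    rw [hval]
    have hk1 : (1:ℝ) ≤ (K:ℝ) := by exact_mod_cast hK
    have hkey := key_even (acb K ^ 2) (K:ℝ) hk1 (sq_nonneg _) (acb_sq_upper K) (acb_sq_lower K)
    push_cast
    rw [show (2:ℝ) * ((K:ℝ) + (K:ℝ)) = 4 * (K:ℝ) by ring]
    exact hkey
  · -- odd: t = 2K+1, n = 4K+2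
    have hK : 1 ≤ K := by omega
    have hch : ((2 * K + 1) - 1).choose ((2 * K + 1) / 2) = Nat.centralBinom K := by
      rw [show (2 * K + 1) - 1 = 2 * K by omega, show (2 * K + 1) / 2 = K by omega]
      rfl
    rw [hch]
    have hval : (2:ℝ) ^ (-((2 * (2 * K + 1) : ℕ) : ℤ)) * ((Nat.centralBinom K : ℝ)) ^ 2
        = acb K ^ 2 / 4 := by
      rw [zpow_neg, zpow_natCast, show 2 * (2 * K + 1) = 4 * K + 2 by ring, pow_add, two_pow_4K,
        acb]
      have h4 : (0:ℝ) < (4:ℝ) ^ K := by positivity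
      field_simp
      ring_nf
    rw [hval]
    have hk1 : (1:ℝ) ≤ (K:ℝ) := by exact_mod_cast hK
    have hkey := key_odd (acb K ^ 2) (K:ℝ) hk1 (sq_nonneg _) (acb_sq_upper K) (acb_sq_lower K)
    push_cast
    rw [show (2:ℝ) * (2 * (K:ℝ) + 1) - 2 = 4 * (K:ℝ) by ring,
      show (2:ℝ) * (2 * (K:ℝ) + 1) = 4 * (K:ℝ) + 2 by ring]
    exact hkey
end
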